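/- Let Δ ⊂ ℝ^n be a rational simplicial cone, i.e. Δ = {λ_1 k_1 + ⋯ + λ_r k_r : λ_i ∈ ℝ, λ_i > 0 for all i} for some ℝ-linearly independent vectors k_1,…,k_r ∈ ℤ^n. Then there exists a finite partition of Δ into simple cones, i.e. cones of the form {μ_1 v_1 + ⋯ + μ_m v_m : μ_i ∈ ℝ, μ_i > 0 for all i} where v_1,…,v_m are part of a ℤ-module basis of ℤ^n. -/

import Mathlib

/-! Decomposition of a rational simplicial cone into simple cones (cones spanned
by vectors that are part of a ℤ-module basis of ℤ^n). -/

noncomputable section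
namespace SD

open Finset

variable {n : ℕ}

def castL (n : ℕ) : (Fin n → ℤ) →ₗ[ℤ] (Fin n → ℝ) :=
  LinearMap.pi (fun i => (Int.castAddHom ℝ).toIntLinearMap.comp (LinearMap.proj i))

@[simp] lemma castL_apply (u : Fin n → ℤ) (i : Fin n) : castL n u i = (u i : ℝ) := rfl

lemma castL_inj : Function.Injective (castL n) := by
  intro a b h
  funext i
  have := congrFun h i
  have h2 : ((a i : ℝ)) = (b i : ℝ) := this
  exact_mod_cast h2

lemma li_int {r : ℕ} (k : Fin r → (Fin n → ℤ))
    (hli : LinearIndependent ℝ (fun j => (fun i => (k j i : ℝ)))) :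
    LinearIndependent ℤ k := by
  have h1 : LinearIndependent ℤ (fun j => (fun i => (k j i : ℝ))) :=
    hli.restrict_scalars (R := ℤ) (by
      intro c c' h
      have : ((c : ℝ)) = (c' : ℝ) := by simpa using h
      exact_mod_cast this)
  exact LinearIndependent.of_comp (castL n) h1

def coneOf {r : ℕ} (k : Fin r → (Fin n → ℤ)) : Set (Fin n → ℝ) :=
  {x | ∃ lam : Fin r → ℝ, (∀ j, 0 < lam j) ∧ x = ∑ j, lam j • (fun i => (k j i : ℝ))}

def IsSimple (Δ' : Set (Fin n → ℝ)) : Prop :=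
  ∃ (m : ℕ) (v : Fin m → (Fin n → ℤ)) (b : Module.Basis (Fin n) ℤ (Fin n → ℤ)) (ι : Fin m ↪ Fin n),
    (∀ i, v i = b (ι i)) ∧
    Δ' = {x | ∃ mu : Fin m → ℝ, (∀ i, 0 < mu i) ∧
      x = ∑ i, mu i • (fun j => (v i j : ℝ))}

/-- the half-open box lattice points -/
def Bset {r : ℕ} (k : Fin r → (Fin n → ℤ)) : Set (Fin n → ℤ) :=
  {u | ∃ lam : Fin r → ℝ, (∀ j, lam j ∈ Set.Ioc (0:ℝ) 1) ∧
    castL n u = ∑ j, lam j • castL n (k j)}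

lemma base_case {r : ℕ} (k : Fin r → (Fin n → ℤ))
    (hli : LinearIndependent ℝ (fun j => (fun i => (k j i : ℝ))))
    (hB : Bset k ⊆ {∑ j, k j}) : IsSimple (coneOf k) := by
  classical
  have hliZ : LinearIndependent ℤ k := li_int k hli
  set S : Submodule ℤ (Fin n → ℤ) := Submodule.span ℤ (Set.range k) with hS
  -- castL maps S into the real span
  have hcastS : ∀ x ∈ S, castL n x ∈ Submodule.span ℝ (Set.range (fun j => castL n (k j))) := by
    intro x hx
    have : S ≤ Submodule.comap (castL n) ((Submodule.span ℝ (Set.range (fun j => castL n (k j)))).restrictScalars ℤ) := by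
      rw [hS, Submodule.span_le]
      rintro _ ⟨j, rfl⟩
      exact Submodule.subset_span ⟨j, rfl⟩
    exact this hx
  -- saturation
  have hsat : ∀ x : Fin n → ℤ, castL n x ∈ Submodule.span ℝ (Set.range (fun j => castL n (k j))) → x ∈ S := by
    intro x hx
    rw [Submodule.mem_span_range_iff_exists_fun] at hx
    obtain ⟨c, hc⟩ := hx
    set y : Fin n → ℤ := x - ∑ j, (⌈c j⌉ - 1) • k j with hy
    have hkS : ∀ j, k j ∈ S := fun j => Submodule.subset_span ⟨j, rfl⟩
    have hyR : castL n y = ∑ j, (c j - ((⌈c j⌉ : ℝ) - 1)) • castL n (k j) := by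
      have h1 : castL n y = castL n x - ∑ j, ((⌈c j⌉ - 1 : ℤ) : ℝ) • castL n (k j) := by
        rw [hy, map_sub, map_sum]
        congr 1
        refine Finset.sum_congr rfl (fun j _ => ?_)
        rw [map_zsmul]
        rw [Int.cast_smul_eq_zsmul]
      rw [h1, ← hc, ← Finset.sum_sub_distrib]
      refine Finset.sum_congr rfl (fun j _ => ?_)
      rw [← sub_smul]
      norm_num
    have hyB : y ∈ Bset k := by
      refine ⟨fun j => c j - ((⌈c j⌉ : ℝ) - 1), fun j => ?_, hyR⟩
      constructor
      · have := Int.ceil_lt_add_one (c j)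
        push_cast at this ⊢
        linarith
      · have := Int.le_ceil (c j)
        push_cast at this ⊢
        linarith
    have hy2 : y = ∑ j, k j := hB hyB
    have : x = y + ∑ j, (⌈c j⌉ - 1) • k j := by rw [hy]; abel
    rw [this, hy2]
    exact Submodule.add_mem _ (Submodule.sum_mem _ (fun j _ => hkS j))
      (Submodule.sum_mem _ (fun j _ => zsmul_mem (hkS j) _))
  -- torsion-free quotient
  have htf : NoZeroSMulDivisors ℤ ((Fin n → ℤ) ⧸ S) := by
    constructor
    intro c x h
    by_cases hc : c = 0
    · exact Or.inl hc
    right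
    obtain ⟨y, rfl⟩ := S.mkQ_surjective x
    have hcy : c • y ∈ S := by
      rwa [← map_smul, Submodule.mkQ_apply, Submodule.Quotient.mk_eq_zero] at h
    have h1 : castL n (c • y) ∈ Submodule.span ℝ (Set.range (fun j => castL n (k j))) :=
      hcastS _ hcy
    have h2 : castL n y ∈ Submodule.span ℝ (Set.range (fun j => castL n (k j))) := by
      have h3 : castL n (c • y) = (c : ℝ) • castL n y := by
        rw [map_zsmul, Int.cast_smul_eq_zsmul]
      have h4 : castL n y = ((c : ℝ))⁻¹ • castL n (c • y) := by
        rw [h3, smul_smul, inv_mul_cancel₀ (by exact_mod_cast hc), one_smul]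
      rw [h4]
      exact Submodule.smul_mem _ _ h1
    have := hsat y h2
    simp [Submodule.Quotient.mk_eq_zero, this]
  haveI := htf
  haveI : Module.Free ℤ ((Fin n → ℤ) ⧸ S) := Module.free_of_finite_type_torsion_free'
  -- splitting
  obtain ⟨σ, hσ⟩ := Module.projective_lifting_property S.mkQ (LinearMap.id)
    S.mkQ_surjective
  have hσ' : ∀ z, S.mkQ (σ z) = z := fun z => by
    have := congrFun (congrArg (fun f => f.toFun) hσ) z
    simpa using this
  have hcompl : IsCompl S (LinearMap.range σ) := by
    constructor
    · rw [disjoint_iff]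
      ext z
      simp only [Submodule.mem_inf, Submodule.mem_bot]
      constructor
      · rintro ⟨hz1, w, rfl⟩
        have : S.mkQ (σ w) = 0 := by
          rwa [Submodule.mkQ_apply, Submodule.Quotient.mk_eq_zero]
        rw [hσ' w] at this
        rw [this, map_zero]
      · rintro rfl
        exact ⟨S.zero_mem, 0, map_zero σ⟩
    · rw [codisjoint_iff, eq_top_iff]
      intro z _
      have : z - σ (S.mkQ z) ∈ S := by
        rw [← Submodule.Quotient.mk_eq_zero, ← Submodule.mkQ_apply, map_sub, hσ' (S.mkQ z),
          sub_self]
      rw [show z = (z - σ (S.mkQ z)) + σ (S.mkQ z) by abel]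
      exact Submodule.add_mem_sup this ⟨S.mkQ z, rfl⟩
  -- bases
  let bS : Module.Basis (Fin r) ℤ S := Module.Basis.span hliZ
  have hσinj : Function.Injective σ := by
    intro a b h
    have := congrArg S.mkQ h
    rwa [hσ' a, hσ' b] at this
  let eQ : ((Fin n → ℤ) ⧸ S) ≃ₗ[ℤ] LinearMap.range σ := LinearEquiv.ofInjective σ hσinj
  let bQ : Module.Basis (Module.Free.ChooseBasisIndex ℤ ((Fin n → ℤ) ⧸ S)) ℤ (LinearMap.range σ) :=
    (Module.Free.chooseBasis ℤ ((Fin n → ℤ) ⧸ S)).map eQ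
  let b0 : Module.Basis (Fin r ⊕ Module.Free.ChooseBasisIndex ℤ ((Fin n → ℤ) ⧸ S)) ℤ (Fin n → ℤ) :=
    (bS.prod bQ).map (Submodule.prodEquivOfIsCompl S (LinearMap.range σ) hcompl)
  have hcard : Fintype.card (Fin r ⊕ Module.Free.ChooseBasisIndex ℤ ((Fin n → ℤ) ⧸ S)) = n := by
    have h1 := Module.finrank_eq_card_basis b0
    have h2 := Module.finrank_eq_card_basis (Pi.basisFun ℤ (Fin n))
    rw [h1] at h2
    simp only [Fintype.card_fin, Fintype.card_sum] at h2 ⊢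
    omega
  let e := Fintype.equivFinOfCardEq hcard
  refine ⟨r, k, b0.reindex e, ⟨fun i => e (Sum.inl i), fun a b h => by
    simpa using e.injective h⟩, fun i => ?_, rfl⟩
  simp only [Function.Embedding.coeFn_mk, Module.Basis.reindex_apply, Equiv.symm_apply_apply]
  show k i = b0 (e.symm (e (Sum.inl i)))
  rw [Equiv.symm_apply_apply]
  show k i = (bS.prod bQ).map (Submodule.prodEquivOfIsCompl S (LinearMap.range σ) hcompl) (Sum.inl i)
  rw [Module.Basis.map_apply]
  have h5 : (bS.prod bQ) (Sum.inl i) = (bS i, 0) :=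
    Prod.ext (Module.Basis.prod_apply_inl_fst bS bQ i) (Module.Basis.prod_apply_inl_snd bS bQ i)
  rw [h5, Submodule.coe_prodEquivOfIsCompl']
  simp only [Submodule.coe_zero, add_zero]
  exact (congrArg Subtype.val (Module.Basis.span_apply hliZ i)).symm


section helpers

variable {r : ℕ}

lemma sum_orderIso {V : Type*} [AddCommMonoid V] (S : Finset (Fin r)) (f : Fin r → V) :
    ∑ j : Fin S.card, f ((S.orderIsoOfFin rfl j : Fin r)) = ∑ i ∈ S, f i := by
  rw [← Finset.sum_attach S f]
  exact Fintype.sum_equiv (S.orderIsoOfFin rfl).toEquiv _ _ (fun j => rfl)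

lemma sum_zero_off {V : Type*} [AddCommMonoid V] (S : Finset (Fin r)) (c : Fin r → V)
    (h : ∀ i ∉ S, c i = 0) : ∑ i ∈ S, c i = ∑ i, c i :=
  Finset.sum_subset (Finset.subset_univ S) (fun i _ hi => h i hi)

/-- coefficient uniqueness -/
lemma coeff_unique {k : Fin r → (Fin n → ℤ)}
    (hli : LinearIndependent ℝ (fun j => (fun i => (k j i : ℝ))))
    {a b : Fin r → ℝ}
    (h : ∑ j, a j • castL n (k j) = ∑ j, b j • castL n (k j)) : a = b := by
  have h2 : ∑ j, (a j - b j) • castL n (k j) = 0 := by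
    simp only [sub_smul, Finset.sum_sub_distrib, h, sub_self]
  funext j
  have := Fintype.linearIndependent_iff.1 hli (fun j => a j - b j) h2 j
  linarith [this]

/-- the generators of a piece -/
def pieceGen (k : Fin r → (Fin n → ℤ)) (w : Fin n → ℤ) (S : Finset (Fin r)) :
    Fin (S.card + 1) → (Fin n → ℤ) :=
  Fin.cons w (fun j => k ((S.orderIsoOfFin rfl j : Fin r)))

lemma sum_cons_pieceGen (k : Fin r → (Fin n → ℤ)) (w : Fin n → ℤ) (S : Finset (Fin r))
    (t : ℝ) (c : Fin r → ℝ) (hc0 : ∀ i ∉ S, c i = 0) :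
    ∑ j, (Fin.cons t (fun j => c ((S.orderIsoOfFin rfl j : Fin r))) : Fin (S.card+1) → ℝ) j •
      castL n (pieceGen k w S j) = t • castL n w + ∑ i, c i • castL n (k i) := by
  have h2 : ∑ j : Fin S.card,
        (Fin.cons t (fun j => c ((S.orderIsoOfFin rfl j : Fin r))) : Fin (S.card+1) → ℝ) j.succ •
          castL n (pieceGen k w S j.succ)
      = ∑ i, c i • castL n (k i) :=
    calc ∑ j : Fin S.card,
        (Fin.cons t (fun j => c ((S.orderIsoOfFin rfl j : Fin r))) : Fin (S.card+1) → ℝ) j.succ •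
          castL n (pieceGen k w S j.succ)
        = ∑ j : Fin S.card, c ((S.orderIsoOfFin rfl j : Fin r)) •
          castL n (k ((S.orderIsoOfFin rfl j : Fin r))) :=
          Finset.sum_congr rfl (fun j _ => rfl)
      _ = ∑ i ∈ S, c i • castL n (k i) := sum_orderIso S (fun i => c i • castL n (k i))
      _ = ∑ i, c i • castL n (k i) :=
          sum_zero_off S _ (fun i hi => by rw [hc0 i hi, zero_smul])
  rw [Fin.sum_univ_succ, h2]
  rfl

lemma cons_decomp (S : Finset (Fin r)) (mu : Fin (S.card + 1) → ℝ) :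
    ∃ c : Fin r → ℝ, (∀ i ∉ S, c i = 0) ∧
      (∀ (i : Fin r) (h : i ∈ S), c i = mu (((S.orderIsoOfFin rfl).symm ⟨i, h⟩).succ)) ∧
      (∀ j : Fin S.card, c ((S.orderIsoOfFin rfl j : Fin r)) = mu j.succ) ∧
      mu = Fin.cons (mu 0) (fun j => c ((S.orderIsoOfFin rfl j : Fin r))) := by
  classical
  refine ⟨fun i => if h : i ∈ S then mu (((S.orderIsoOfFin rfl).symm ⟨i, h⟩).succ) else 0,
    fun i hi => dif_neg hi, fun i h => dif_pos h, ?_, ?_⟩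
  · intro j
    have hmem : ((S.orderIsoOfFin rfl j : Fin r)) ∈ S := (S.orderIsoOfFin rfl j).2
    have h2 : (⟨(S.orderIsoOfFin rfl j : Fin r), hmem⟩ : {y // y ∈ S})
        = S.orderIsoOfFin rfl j := rfl
    simp only [dif_pos hmem, h2, OrderIso.symm_apply_apply]
  · funext j
    refine Fin.cases rfl (fun j' => ?_) j
    rw [Fin.cons_succ]
    have hmem : ((S.orderIsoOfFin rfl j' : Fin r)) ∈ S := (S.orderIsoOfFin rfl j').2
    have h2 : (⟨(S.orderIsoOfFin rfl j' : Fin r), hmem⟩ : {y // y ∈ S})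
        = S.orderIsoOfFin rfl j' := rfl
    simp only [dif_pos hmem, h2, OrderIso.symm_apply_apply]

/-- normal form for representations over piece generators -/
lemma piece_repr_iff (k : Fin r → (Fin n → ℤ)) (w : Fin n → ℤ) (S : Finset (Fin r))
    (P : ℝ → Prop) (x : Fin n → ℝ) :
    (∃ mu : Fin (S.card + 1) → ℝ, (∀ j, P (mu j)) ∧
        x = ∑ j, mu j • castL n (pieceGen k w S j)) ↔
      ∃ (t : ℝ) (c : Fin r → ℝ), P t ∧ (∀ i ∈ S, P (c i)) ∧ (∀ i ∉ S, c i = 0) ∧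
        x = t • castL n w + ∑ i, c i • castL n (k i) := by
  constructor
  · rintro ⟨mu, hmu, rfl⟩
    obtain ⟨c, hc0, hcS, hceq, hmc⟩ := cons_decomp S mu
    refine ⟨mu 0, c, hmu 0, ?_, hc0, ?_⟩
    · intro i hi
      rw [hcS i hi]; exact hmu _
    · rw [← sum_cons_pieceGen k w S (mu 0) c hc0, ← hmc]
  · rintro ⟨t, c, ht, hcpos, hc0, rfl⟩
    refine ⟨Fin.cons t (fun j => c ((S.orderIsoOfFin rfl j : Fin r))), ?_, ?_⟩
    · intro j
      refine Fin.cases ?_ ?_ j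
      · exact ht
      · intro j'
        simp only [Fin.cons_succ]
        exact hcpos _ (S.orderIsoOfFin rfl j').2
    · exact (sum_cons_pieceGen k w S t c hc0).symm

lemma mem_coneOf_piece_iff (k : Fin r → (Fin n → ℤ)) (w : Fin n → ℤ) (S : Finset (Fin r))
    (x : Fin n → ℝ) :
    x ∈ coneOf (pieceGen k w S) ↔
      ∃ (t : ℝ) (c : Fin r → ℝ), 0 < t ∧ (∀ i ∈ S, 0 < c i) ∧ (∀ i ∉ S, c i = 0) ∧
        x = t • castL n w + ∑ i, c i • castL n (k i) :=
  piece_repr_iff k w S (fun a => 0 < a) x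

/-- rewriting a t-c combination as a plain combination of the kᵢ -/
lemma t_c_sum {k : Fin r → (Fin n → ℤ)} {w : Fin n → ℤ} {lam : Fin r → ℝ}
    (hw : castL n w = ∑ j, lam j • castL n (k j)) (t : ℝ) (c : Fin r → ℝ) :
    t • castL n w + ∑ i, c i • castL n (k i) = ∑ i, (t * lam i + c i) • castL n (k i) := by
  rw [hw, Finset.smul_sum, ← Finset.sum_add_distrib]
  refine Finset.sum_congr rfl (fun i _ => ?_)
  rw [smul_smul, add_smul]

lemma pieceGen_li {k : Fin r → (Fin n → ℤ)} {w : Fin n → ℤ} {lam : Fin r → ℝ}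
    (hli : LinearIndependent ℝ (fun j => (fun i => (k j i : ℝ))))
    (hw : castL n w = ∑ j, lam j • castL n (k j))
    (S : Finset (Fin r)) (i₀ : Fin r) (hi₀ : i₀ ∉ S) (hlam₀ : lam i₀ ≠ 0) :
    LinearIndependent ℝ (fun j => (fun i => (pieceGen k w S j i : ℝ))) := by
  rw [Fintype.linearIndependent_iff]
  intro d hd
  obtain ⟨c, hc0, hcS, hceq, hmc⟩ := cons_decomp S d
  have hsum : ∑ i, (d 0 * lam i + c i) • castL n (k i) = 0 := by
    rw [← t_c_sum hw, ← sum_cons_pieceGen k w S (d 0) c hc0, ← hmc]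
    exact hd
  have hcoef : ∀ i, d 0 * lam i + c i = 0 :=
    Fintype.linearIndependent_iff.1 hli _ hsum
  have hd0 : d 0 = 0 := by
    have := hcoef i₀
    rw [hc0 i₀ hi₀, add_zero, mul_eq_zero] at this
    tauto
  have hcz : ∀ i, c i = 0 := by
    intro i
    have := hcoef i
    rw [hd0, zero_mul, zero_add] at this
    exact this
  intro j
  refine Fin.cases hd0 (fun j' => ?_) j
  rw [← hceq j', hcz]

lemma piece_cover {k : Fin r → (Fin n → ℤ)} {w : Fin n → ℤ} {lam : Fin r → ℝ}
    (hw : castL n w = ∑ j, lam j • castL n (k j))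
    (hlam0 : ∀ i, 0 ≤ lam i) (hne : ∃ i, 0 < lam i) (x : Fin n → ℝ)
    (hx : x ∈ coneOf k) :
    ∃ S : Finset (Fin r), S ≠ Finset.univ ∧ (∀ i, lam i = 0 → i ∈ S) ∧
      x ∈ coneOf (pieceGen k w S) := by
  classical
  obtain ⟨mu, hmu, rfl⟩ := hx
  set T : Finset (Fin r) := Finset.univ.filter (fun i => 0 < lam i) with hT
  have hTne : T.Nonempty := by
    obtain ⟨i, hi⟩ := hne
    exact ⟨i, by simp [hT, hi]⟩
  obtain ⟨i₀, hi₀T, hmin⟩ := T.exists_min_image (fun i => mu i / lam i) hTne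
  have hlami₀ : 0 < lam i₀ := by
    simp only [hT, Finset.mem_filter] at hi₀T
    exact hi₀T.2
  set t : ℝ := mu i₀ / lam i₀ with htdef
  have ht : 0 < t := div_pos (hmu i₀) hlami₀
  set c : Fin r → ℝ := fun i => mu i - t * lam i with hc
  have hcnneg : ∀ i, 0 ≤ c i := by
    intro i
    rcases eq_or_lt_of_le (hlam0 i) with h | h
    · have : c i = mu i := by simp [hc, ← h]
      rw [this]; exact le_of_lt (hmu i)
    · have h1 : t ≤ mu i / lam i := hmin i (by simp [hT, h])
      have h2 : t * lam i ≤ mu i := by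
        rw [le_div_iff₀ h] at h1
        linarith
      simp only [hc]; linarith
  have hci₀ : c i₀ = 0 := by
    simp only [hc, htdef]
    field_simp
    ring
  set S : Finset (Fin r) := Finset.univ.filter (fun i => 0 < c i) with hS
  refine ⟨S, ?_, ?_, ?_⟩
  · intro h
    have : i₀ ∈ S := h ▸ Finset.mem_univ i₀
    simp only [hS, Finset.mem_filter] at this
    rw [hci₀] at this
    exact lt_irrefl 0 this.2
  · intro i hi
    have : c i = mu i := by simp [hc, hi]
    simp only [hS, Finset.mem_filter]
    exact ⟨Finset.mem_univ i, by rw [this]; exact hmu i⟩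
  · rw [mem_coneOf_piece_iff]
    refine ⟨t, c, ht, ?_, ?_, ?_⟩
    · intro i hi
      simp only [hS, Finset.mem_filter] at hi
      exact hi.2
    · intro i hi
      simp only [hS, Finset.mem_filter] at hi
      have := hcnneg i
      push_neg at hi
      have h2 := hi (Finset.mem_univ i)
      linarith
    · rw [t_c_sum hw]
      refine Finset.sum_congr rfl (fun i _ => ?_)
      congr 1
      simp [hc]
  
lemma piece_subset_lemma {k : Fin r → (Fin n → ℤ)} {lam : Fin r → ℝ}
    (hli : LinearIndependent ℝ (fun j => (fun i => (k j i : ℝ))))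
    (hlam0 : ∀ i, 0 ≤ lam i)
    (S1 S2 : Finset (Fin r)) (t1 t2 : ℝ) (c1 c2 : Fin r → ℝ)
    (h1ne : S1 ≠ Finset.univ) (h1z : ∀ i, lam i = 0 → i ∈ S1)
    (h2z : ∀ i, lam i = 0 → i ∈ S2)
    (hc1pos : ∀ i ∈ S1, 0 < c1 i) (hc1z : ∀ i ∉ S1, c1 i = 0)
    (hc2pos : ∀ i ∈ S2, 0 < c2 i) (hc2z : ∀ i ∉ S2, c2 i = 0)
    (heq : ∀ i, t1 * lam i + c1 i = t2 * lam i + c2 i) :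
    S1 ⊆ S2 := by
  -- first : t1 ≥ t2
  obtain ⟨i1, hi1⟩ : ∃ i, i ∉ S1 := by
    by_contra h
    push_neg at h
    exact h1ne (Finset.eq_univ_iff_forall.2 h)
  have hlam1 : 0 < lam i1 := by
    rcases eq_or_lt_of_le (hlam0 i1) with h | h
    · exact absurd (h1z i1 h.symm) hi1
    · exact h
  have ht12 : t2 ≤ t1 := by
    have := heq i1
    rw [hc1z i1 hi1, add_zero] at this
    have h2 : 0 ≤ c2 i1 := by
      by_cases hmem : i1 ∈ S2
      · exact le_of_lt (hc2pos i1 hmem)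
      · rw [hc2z i1 hmem]
    nlinarith
  intro j hj
  by_contra hj2
  have hlamj : 0 < lam j := by
    rcases eq_or_lt_of_le (hlam0 j) with h | h
    · exact absurd (h2z j h.symm) hj2
    · exact h
  have := heq j
  rw [hc2z j hj2, add_zero] at this
  have hc1j := hc1pos j hj
  nlinarith

lemma piece_disjoint {k : Fin r → (Fin n → ℤ)} {w : Fin n → ℤ} {lam : Fin r → ℝ}
    (hli : LinearIndependent ℝ (fun j => (fun i => (k j i : ℝ))))
    (hw : castL n w = ∑ j, lam j • castL n (k j))
    (hlam0 : ∀ i, 0 ≤ lam i)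
    (S1 S2 : Finset (Fin r))
    (h1ne : S1 ≠ Finset.univ) (h1z : ∀ i, lam i = 0 → i ∈ S1)
    (h2ne : S2 ≠ Finset.univ) (h2z : ∀ i, lam i = 0 → i ∈ S2)
    (x : Fin n → ℝ) (hx1 : x ∈ coneOf (pieceGen k w S1)) (hx2 : x ∈ coneOf (pieceGen k w S2)) :
    S1 = S2 := by
  rw [mem_coneOf_piece_iff] at hx1 hx2
  obtain ⟨t1, c1, ht1, hc1pos, hc1z, hxe1⟩ := hx1
  obtain ⟨t2, c2, ht2, hc2pos, hc2z, hxe2⟩ := hx2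
  have heqv : ∑ i, (t1 * lam i + c1 i) • castL n (k i) = ∑ i, (t2 * lam i + c2 i) • castL n (k i) := by
    rw [← t_c_sum hw, ← t_c_sum hw, ← hxe1, ← hxe2]
  have heqf := coeff_unique hli heqv
  have heq : ∀ i, t1 * lam i + c1 i = t2 * lam i + c2 i := fun i => congrFun heqf i
  refine Finset.Subset.antisymm ?_ ?_
  · exact piece_subset_lemma hli hlam0 S1 S2 t1 t2 c1 c2 h1ne h1z h2z hc1pos hc1z hc2pos hc2z heq
  · exact piece_subset_lemma hli hlam0 S2 S1 t2 t1 c2 c1 h2ne h2z h1z hc2pos hc2z hc1pos hc1z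
      (fun i => (heq i).symm)

open Classical in
noncomputable def coeffFn (k : Fin r → (Fin n → ℤ)) (x : Fin n → ℝ) : Fin r → ℝ :=
  if h : ∃ mu : Fin r → ℝ, x = ∑ i, mu i • castL n (k i) then h.choose else 0

lemma coeffFn_spec {k : Fin r → (Fin n → ℤ)}
    (hli : LinearIndependent ℝ (fun j => (fun i => (k j i : ℝ))))
    {x : Fin n → ℝ} {mu : Fin r → ℝ} (h : x = ∑ i, mu i • castL n (k i)) :
    coeffFn k x = mu := by
  have hex : ∃ mu : Fin r → ℝ, x = ∑ i, mu i • castL n (k i) := ⟨mu, h⟩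
  rw [coeffFn]
  rw [dif_pos hex]
  have h2 : x = ∑ i, hex.choose i • castL n (k i) := hex.choose_spec
  exact coeff_unique hli (h2.symm.trans h)

lemma sum_mem_Bset (k : Fin r → (Fin n → ℤ)) : (∑ j, k j) ∈ Bset k := by
  refine ⟨fun _ => 1, fun j => ⟨zero_lt_one, le_refl 1⟩, ?_⟩
  rw [map_sum]
  refine Finset.sum_congr rfl (fun j _ => ?_)
  rw [one_smul]

lemma Bset_finite (k : Fin r → (Fin n → ℤ)) : (Bset k).Finite := by
  classical
  set C : Fin n → ℤ := fun i => ∑ j, |k j i| with hC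
  have hsub : Bset k ⊆ Set.pi Set.univ (fun i => Set.Icc (-C i) (C i)) := by
    rintro u ⟨lam, hlam, hu⟩
    intro i _
    have hui : (u i : ℝ) = ∑ j, lam j * (k j i : ℝ) := by
      have := congrFun hu i
      simpa using this
    have habs : |(u i : ℝ)| ≤ (C i : ℝ) := by
      rw [hui]
      refine le_trans (Finset.abs_sum_le_sum_abs _ _) ?_
      rw [hC]
      push_cast
      refine Finset.sum_le_sum (fun j _ => ?_)
      rw [abs_mul]
      have h1 : |lam j| ≤ 1 := by
        have := hlam j
        rw [abs_le]
        exact ⟨by linarith [this.1], this.2⟩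
      calc |lam j| * |(k j i : ℝ)| ≤ 1 * |(k j i : ℝ)| :=
            mul_le_mul_of_nonneg_right h1 (abs_nonneg _)
        _ = |(k j i : ℝ)| := one_mul _
    have : |u i| ≤ C i := by exact_mod_cast habs
    rw [Set.mem_Icc]
    exact abs_le.1 this
  refine Set.Finite.subset ?_ hsub
  exact Set.Finite.pi (fun i => Set.finite_Icc _ _)

/-- membership in the Bset of a piece -/
lemma mem_Bset_piece_iff (k : Fin r → (Fin n → ℤ)) (w : Fin n → ℤ) (S : Finset (Fin r))
    (u : Fin n → ℤ) :
    u ∈ Bset (pieceGen k w S) ↔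
      ∃ (t : ℝ) (c : Fin r → ℝ), t ∈ Set.Ioc (0:ℝ) 1 ∧ (∀ i ∈ S, c i ∈ Set.Ioc (0:ℝ) 1) ∧
        (∀ i ∉ S, c i = 0) ∧ castL n u = t • castL n w + ∑ i, c i • castL n (k i) :=
  piece_repr_iff k w S (fun a => a ∈ Set.Ioc (0:ℝ) 1) (castL n u)

lemma measure_lt {k : Fin r → (Fin n → ℤ)} {w : Fin n → ℤ} {lam : Fin r → ℝ}
    (hli : LinearIndependent ℝ (fun j => (fun i => (k j i : ℝ))))
    (hw : castL n w = ∑ j, lam j • castL n (k j))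
    (hlam0 : ∀ i, 0 ≤ lam i) (hlam1 : ∀ i, lam i < 1)
    (S : Finset (Fin r)) (hSne : S ≠ Finset.univ) (hSz : ∀ i, lam i = 0 → i ∈ S) :
    (Bset (pieceGen k w S)).ncard < (Bset k).ncard := by
  classical
  have hfin := Bset_finite k
  have hp : (∑ j, k j) ∈ Bset k := sum_mem_Bset k
  obtain ⟨i1, hi1⟩ : ∃ i, i ∉ S := by
    by_contra h
    push_neg at h
    exact hSne (Finset.eq_univ_iff_forall.2 h)
  have hlamipos : ∀ i ∉ S, 0 < lam i := by
    intro i hi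
    rcases eq_or_lt_of_le (hlam0 i) with h | h
    · exact absurd (hSz i h.symm) hi
    · exact h
  set f : (Fin n → ℤ) → (Fin n → ℤ) := fun u =>
    u - ∑ i ∈ S.filter (fun i => 1 < coeffFn k (castL n u) i), k i with hf
  -- representation data for u in the piece Bset
  have hrep : ∀ u ∈ Bset (pieceGen k w S), ∃ (t : ℝ) (c : Fin r → ℝ),
      t ∈ Set.Ioc (0:ℝ) 1 ∧ (∀ i ∈ S, c i ∈ Set.Ioc (0:ℝ) 1) ∧ (∀ i ∉ S, c i = 0) ∧
      (∀ i, coeffFn k (castL n u) i = t * lam i + c i) := by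
    intro u hu
    obtain ⟨t, c, ht, hcS, hc0, heq⟩ := (mem_Bset_piece_iff k w S u).1 hu
    refine ⟨t, c, ht, hcS, hc0, ?_⟩
    have : coeffFn k (castL n u) = (fun i => t * lam i + c i) :=
      coeffFn_spec hli (by rw [heq, t_c_sum hw])
    exact fun i => congrFun this i
  -- the coefficient vector of f u
  have hfcoeff : ∀ u ∈ Bset (pieceGen k w S),
      castL n (f u) = ∑ i, (coeffFn k (castL n u) i -
        (if i ∈ S.filter (fun i => 1 < coeffFn k (castL n u) i) then (1:ℝ) else 0)) •
          castL n (k i) := by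
    intro u hu
    set μ : Fin r → ℝ := coeffFn k (castL n u) with hμdef
    obtain ⟨t, c, ht, hcS, hc0, hμi⟩ := hrep u hu
    have hueq : castL n u = ∑ i, μ i • castL n (k i) := by
      obtain ⟨t', c', ht', hcS', hc0', heq'⟩ := (mem_Bset_piece_iff k w S u).1 hu
      have hsp : μ = (fun i => t' * lam i + c' i) :=
        coeffFn_spec hli (by rw [heq', t_c_sum hw])
      rw [hsp, heq', t_c_sum hw]
    set F := S.filter (fun i => 1 < μ i) with hF
    have hsumF : (∑ i ∈ F, castL n (k i)) = ∑ i, (if i ∈ F then (1:ℝ) else 0) • castL n (k i) := by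
      rw [show (∑ i, (if i ∈ F then (1:ℝ) else 0) • castL n (k i))
          = ∑ i, (if i ∈ F then castL n (k i) else 0) from
        Finset.sum_congr rfl (fun i _ => by split <;> simp)]
      rw [Finset.sum_ite_mem, Finset.univ_inter]
    show castL n (u - ∑ i ∈ F, k i) = ∑ i, (μ i - (if i ∈ F then (1:ℝ) else 0)) • castL n (k i)
    rw [map_sub, map_sum, hsumF, hueq, ← Finset.sum_sub_distrib]
    exact Finset.sum_congr rfl (fun i _ => by rw [sub_smul])
  -- maps to
  have hmaps : ∀ u ∈ Bset (pieceGen k w S), f u ∈ Bset k \ {∑ j, k j} := by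
    intro u hu
    set μ : Fin r → ℝ := coeffFn k (castL n u) with hμdef
    obtain ⟨t, c, ht, hcS, hc0, hμi0⟩ := hrep u hu
    have hμi : ∀ i, μ i = t * lam i + c i := hμi0
    have hfc := hfcoeff u hu
    set F := S.filter (fun i => 1 < μ i) with hF
    have hFsub : F ⊆ S := Finset.filter_subset _ _
    have htlam : ∀ i, 0 ≤ t * lam i ∧ t * lam i ≤ lam i := by
      intro i
      constructor
      · exact mul_nonneg (le_of_lt ht.1) (hlam0 i)
      · calc t * lam i ≤ 1 * lam i := mul_le_mul_of_nonneg_right ht.2 (hlam0 i)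
          _ = lam i := one_mul _
    constructor
    · refine ⟨fun i => μ i - (if i ∈ F then (1:ℝ) else 0), ?_, hfc⟩
      intro i
      show μ i - (if i ∈ F then (1:ℝ) else 0) ∈ Set.Ioc (0:ℝ) 1
      refine Set.mem_Ioc.2 ?_
      by_cases hiS : i ∈ S
      · have hci := hcS i hiS
        by_cases hiF : i ∈ F
        · rw [if_pos hiF]
          have h1 : 1 < μ i := (Finset.mem_filter.1 hiF).2
          have h2 : μ i < 2 := by
            rw [hμi i]
            have := (htlam i).2
            have := hlam1 i
            linarith [hci.2]
          constructor <;> linarith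
        · rw [if_neg hiF]
          have h1 : ¬ 1 < μ i := fun hcon => hiF (Finset.mem_filter.2 ⟨hiS, hcon⟩)
          have h2 : 0 < μ i := by
            rw [hμi i]
            have := (htlam i).1
            linarith [hci.1]
          constructor <;> linarith
      · have hiF : i ∉ F := fun hcon => hiS (hFsub hcon)
        rw [if_neg hiF, sub_zero, hμi i, hc0 i hiS, add_zero]
        have h1 : 0 < lam i := hlamipos i hiS
        have h2 : t * lam i ≤ lam i := (htlam i).2
        have h3 : lam i < 1 := hlam1 i
        exact ⟨mul_pos ht.1 h1, by linarith⟩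
    · -- f u ≠ ∑ k j
      intro hcon
      rw [Set.mem_singleton_iff] at hcon
      have hpc : castL n (∑ j, k j) = ∑ i, (1:ℝ) • castL n (k i) := by
        rw [map_sum]
        exact Finset.sum_congr rfl (fun j _ => (one_smul _ _).symm)
      have heq1 : (fun i => μ i - (if i ∈ F then (1:ℝ) else 0))
          = (fun _ => (1:ℝ)) := by
        apply coeff_unique hli
        rw [← hfc, hcon, hpc]
      have h1 : μ i1 - (if i1 ∈ F then (1:ℝ) else 0) = 1 := congrFun heq1 i1
      have hiF : i1 ∉ F := fun hcon2 => hi1 (hFsub hcon2)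
      rw [if_neg hiF, sub_zero, hμi i1, hc0 i1 hi1, add_zero] at h1
      have h2 : t * lam i1 < 1 := by
        have := (htlam i1).2
        have := hlam1 i1
        linarith
      rw [h1] at h2
      exact lt_irrefl 1 h2
  -- injectivity
  have hinj : Set.InjOn f (Bset (pieceGen k w S)) := by
    intro u1 hu1 u2 hu2 hfe
    set μ1 : Fin r → ℝ := coeffFn k (castL n u1) with hμ1def
    set μ2 : Fin r → ℝ := coeffFn k (castL n u2) with hμ2def
    obtain ⟨t1, c1, ht1, hcS1, hc01, hμ1i0⟩ := hrep u1 hu1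
    obtain ⟨t2, c2, ht2, hcS2, hc02, hμ2i0⟩ := hrep u2 hu2
    have hμ1i : ∀ i, μ1 i = t1 * lam i + c1 i := hμ1i0
    have hμ2i : ∀ i, μ2 i = t2 * lam i + c2 i := hμ2i0
    have hfc1 := hfcoeff u1 hu1
    have hfc2 := hfcoeff u2 hu2
    set F1 := S.filter (fun i => 1 < μ1 i) with hF1
    set F2 := S.filter (fun i => 1 < μ2 i) with hF2
    have hcoefeq : (fun i => μ1 i - (if i ∈ F1 then (1:ℝ) else 0))
        = (fun i => μ2 i - (if i ∈ F2 then (1:ℝ) else 0)) := by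
      apply coeff_unique hli
      rw [← hfc1, ← hfc2, hfe]
    have hpt : ∀ i, μ1 i - (if i ∈ F1 then (1:ℝ) else 0)
        = μ2 i - (if i ∈ F2 then (1:ℝ) else 0) := fun i => congrFun hcoefeq i
    have hF1sub : F1 ⊆ S := Finset.filter_subset _ _
    have hF2sub : F2 ⊆ S := Finset.filter_subset _ _
    -- t1 = t2
    have ht12 : t1 = t2 := by
      have h1 := hpt i1
      have hiF1 : i1 ∉ F1 := fun hcon => hi1 (hF1sub hcon)
      have hiF2 : i1 ∉ F2 := fun hcon => hi1 (hF2sub hcon)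
      rw [if_neg hiF1, if_neg hiF2, sub_zero, sub_zero, hμ1i i1, hμ2i i1,
        hc01 i1 hi1, hc02 i1 hi1, add_zero, add_zero] at h1
      exact mul_right_cancel₀ (ne_of_gt (hlamipos i1 hi1)) h1
    -- c1 = c2
    have hceq : c1 = c2 := by
      funext i
      by_cases hiS : i ∈ S
      · have heqi := hpt i
        rw [hμ1i i, hμ2i i, ht12] at heqi
        have hb1 := hcS1 i hiS
        have hb2 := hcS2 i hiS
        by_cases h1 : i ∈ F1
        · by_cases h2 : i ∈ F2
          · rw [if_pos h1, if_pos h2] at heqi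
            linarith
          · rw [if_pos h1, if_neg h2, sub_zero] at heqi
            exfalso
            linarith [hb1.2, hb2.1]
        · by_cases h2 : i ∈ F2
          · rw [if_neg h1, if_pos h2, sub_zero] at heqi
            exfalso
            linarith [hb1.1, hb2.2]
          · rw [if_neg h1, if_neg h2, sub_zero, sub_zero] at heqi
            linarith
      · rw [hc01 i hiS, hc02 i hiS]
    -- conclude
    have hcasteq : castL n u1 = castL n u2 := by
      obtain ⟨ta, ca, hta, hcSa, hc0a, heqa⟩ := (mem_Bset_piece_iff k w S u1).1 hu1
      obtain ⟨tb, cb, htb, hcSb, hc0b, heqb⟩ := (mem_Bset_piece_iff k w S u2).1 hu2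
      have ha : μ1 = (fun i => ta * lam i + ca i) :=
        coeffFn_spec hli (by rw [heqa, t_c_sum hw])
      have hb : μ2 = (fun i => tb * lam i + cb i) :=
        coeffFn_spec hli (by rw [heqb, t_c_sum hw])
      have h1 : castL n u1 = ∑ i, μ1 i • castL n (k i) := by
        rw [ha, heqa, t_c_sum hw]
      have h2 : castL n u2 = ∑ i, μ2 i • castL n (k i) := by
        rw [hb, heqb, t_c_sum hw]
      rw [h1, h2]
      refine Finset.sum_congr rfl (fun i _ => ?_)
      rw [hμ1i i, hμ2i i, ht12, hceq]
    exact castL_inj hcasteq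
  calc (Bset (pieceGen k w S)).ncard
      ≤ (Bset k \ {∑ j, k j}).ncard :=
        Set.ncard_le_ncard_of_injOn f hmaps hinj hfin.diff
    _ < (Bset k).ncard := Set.ncard_diff_singleton_lt_of_mem hp hfin

lemma exists_w {k : Fin r → (Fin n → ℤ)}
    (hli : LinearIndependent ℝ (fun j => (fun i => (k j i : ℝ))))
    (hnb : ¬ (Bset k ⊆ {∑ j, k j})) :
    ∃ (w : Fin n → ℤ) (lam : Fin r → ℝ),
      castL n w = ∑ j, lam j • castL n (k j) ∧ (∀ i, 0 ≤ lam i) ∧ (∀ i, lam i < 1) ∧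
      (∃ i, 0 < lam i) := by
  classical
  rw [Set.not_subset] at hnb
  obtain ⟨u, hu, hune⟩ := hnb
  rw [Set.mem_singleton_iff] at hune
  obtain ⟨mu, hmu, huc⟩ := hu
  set G : Finset (Fin r) := Finset.univ.filter (fun i => mu i = 1) with hG
  refine ⟨u - ∑ i ∈ G, k i, fun i => mu i - (if i ∈ G then (1:ℝ) else 0), ?_, ?_, ?_, ?_⟩
  · have hsumG : (∑ i ∈ G, castL n (k i)) = ∑ i, (if i ∈ G then (1:ℝ) else 0) • castL n (k i) := by
      rw [show (∑ i, (if i ∈ G then (1:ℝ) else 0) • castL n (k i))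
          = ∑ i, (if i ∈ G then castL n (k i) else 0) from
        Finset.sum_congr rfl (fun i _ => by split <;> simp)]
      rw [Finset.sum_ite_mem, Finset.univ_inter]
    rw [map_sub, map_sum, hsumG, huc, ← Finset.sum_sub_distrib]
    exact Finset.sum_congr rfl (fun i _ => by rw [sub_smul])
  · intro i
    show 0 ≤ mu i - (if i ∈ G then (1:ℝ) else 0)
    by_cases hiG : i ∈ G
    · have : mu i = 1 := (Finset.mem_filter.1 hiG).2
      rw [if_pos hiG, this]
      norm_num
    · rw [if_neg hiG, sub_zero]
      exact le_of_lt (hmu i).1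
  · intro i
    show mu i - (if i ∈ G then (1:ℝ) else 0) < 1
    by_cases hiG : i ∈ G
    · have : mu i = 1 := (Finset.mem_filter.1 hiG).2
      rw [if_pos hiG, this]
      norm_num
    · rw [if_neg hiG, sub_zero]
      have h1 := (hmu i).2
      have h2 : mu i ≠ 1 := fun hcon => hiG (Finset.mem_filter.2 ⟨Finset.mem_univ i, hcon⟩)
      exact lt_of_le_of_ne h1 h2
  · by_contra h
    push_neg at h
    have hall : ∀ i, mu i = 1 := by
      intro i
      by_contra hne
      have hiG : i ∉ G := fun hcon => hne (Finset.mem_filter.1 hcon).2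
      have hX : mu i - (if i ∈ G then (1:ℝ) else 0) ≤ 0 := h i
      rw [if_neg hiG, sub_zero] at hX
      exact absurd (hmu i).1 (not_lt.2 hX)
    apply hune
    apply castL_inj
    rw [huc, map_sum]
    refine Finset.sum_congr rfl (fun i _ => ?_)
    rw [hall i, one_smul]

lemma piece_subset_cone {k : Fin r → (Fin n → ℤ)} {w : Fin n → ℤ} {lam : Fin r → ℝ}
    (hw : castL n w = ∑ j, lam j • castL n (k j))
    (hlam0 : ∀ i, 0 ≤ lam i)
    (S : Finset (Fin r)) (hSz : ∀ i, lam i = 0 → i ∈ S) :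
    coneOf (pieceGen k w S) ⊆ coneOf k := by
  intro x hx
  rw [mem_coneOf_piece_iff] at hx
  obtain ⟨t, c, ht, hcpos, hc0, hxe⟩ := hx
  refine ⟨fun i => t * lam i + c i, ?_, ?_⟩
  · intro i
    show 0 < t * lam i + c i
    by_cases hiS : i ∈ S
    · have h1 : 0 ≤ t * lam i := mul_nonneg (le_of_lt ht) (hlam0 i)
      have h2 := hcpos i hiS
      linarith
    · rw [hc0 i hiS, add_zero]
      refine mul_pos ht ?_
      rcases eq_or_lt_of_le (hlam0 i) with h | h
      · exact absurd (hSz i h.symm) hiS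
      · exact h
  · rw [show x = t • castL n w + ∑ i, c i • castL n (k i) from hxe, t_c_sum hw]
    rfl

/-- The main induction. -/
lemma main_lemma (N : ℕ) : ∀ {r : ℕ} (k : Fin r → (Fin n → ℤ)),
    LinearIndependent ℝ (fun j => (fun i => (k j i : ℝ))) →
    (Bset k).ncard ≤ N →
    ∃ parts : Finset (Set (Fin n → ℝ)),
      (∀ A ∈ parts, ∀ B ∈ parts, A ≠ B → A ∩ B = ∅) ∧
      ⋃₀ (parts : Set (Set (Fin n → ℝ))) = coneOf k ∧
      ∀ Δ' ∈ parts, IsSimple Δ' := by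
  induction N with
  | zero =>
    intro r k hli hcard
    exfalso
    have h1 : 0 < (Bset k).ncard :=
      (Set.ncard_pos (Bset_finite k)).2 ⟨_, sum_mem_Bset k⟩
    omega
  | succ N ih =>
    intro r k hli hcard
    classical
    by_cases hb : Bset k ⊆ {∑ j, k j}
    · refine ⟨{coneOf k}, ?_, ?_, ?_⟩
      · intro A hA B hB hAB
        rw [Finset.mem_singleton] at hA hB
        exact absurd (hA.trans hB.symm) hAB
      · rw [Finset.coe_singleton, Set.sUnion_singleton]
      · intro Δ' hΔ'
        rw [Finset.mem_singleton] at hΔ'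
        rw [hΔ']
        exact base_case k hli hb
    · obtain ⟨w, lam, hw, hlam0, hlam1, hpos⟩ := exists_w hli hb
      set 𝒮 : Finset (Finset (Fin r)) :=
        Finset.univ.filter (fun S => S ≠ Finset.univ ∧ ∀ i, lam i = 0 → i ∈ S) with h𝒮
      have hSfacts : ∀ S ∈ 𝒮, S ≠ Finset.univ ∧ ∀ i, lam i = 0 → i ∈ S := by
        intro S hS
        rw [h𝒮, Finset.mem_filter] at hS
        exact hS.2
      have hSmem : ∀ S : Finset (Fin r), S ≠ Finset.univ → (∀ i, lam i = 0 → i ∈ S) → S ∈ 𝒮 := by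
        intro S h1 h2
        rw [h𝒮, Finset.mem_filter]
        exact ⟨Finset.mem_univ S, h1, h2⟩
      have hli' : ∀ S ∈ 𝒮, LinearIndependent ℝ
          (fun j => (fun i => (pieceGen k w S j i : ℝ))) := by
        intro S hS
        obtain ⟨hne, hz⟩ := hSfacts S hS
        obtain ⟨i₀, hi₀⟩ : ∃ i, i ∉ S := by
          by_contra h
          push_neg at h
          exact hne (Finset.eq_univ_iff_forall.2 h)
        exact pieceGen_li hli hw S i₀ hi₀ (fun hcon => hi₀ (hz i₀ hcon))
      have hcard' : ∀ S ∈ 𝒮, (Bset (pieceGen k w S)).ncard ≤ N := by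
        intro S hS
        obtain ⟨hne, hz⟩ := hSfacts S hS
        have := measure_lt hli hw hlam0 hlam1 S hne hz
        omega
      choose! parts hdis hcov hsim using
        (fun S (hS : S ∈ 𝒮) => ih (pieceGen k w S) (hli' S hS) (hcard' S hS))
      have hpartsub : ∀ S ∈ 𝒮, ∀ A ∈ parts S, A ⊆ coneOf (pieceGen k w S) := by
        intro S hS A hA
        rw [← hcov S hS]
        exact Set.subset_sUnion_of_mem hA
      refine ⟨𝒮.biUnion parts, ?_, ?_, ?_⟩
      · intro A hA B hB hAB
        rw [Finset.mem_biUnion] at hA hB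
        obtain ⟨S1, hS1, hA1⟩ := hA
        obtain ⟨S2, hS2, hB2⟩ := hB
        by_cases hSS : S1 = S2
        · subst hSS
          exact hdis S1 hS1 A hA1 B hB2 hAB
        · rw [Set.eq_empty_iff_forall_notMem]
          rintro x ⟨hxA, hxB⟩
          have hx1 : x ∈ coneOf (pieceGen k w S1) := hpartsub S1 hS1 A hA1 hxA
          have hx2 : x ∈ coneOf (pieceGen k w S2) := hpartsub S2 hS2 B hB2 hxB
          obtain ⟨h1ne, h1z⟩ := hSfacts S1 hS1
          obtain ⟨h2ne, h2z⟩ := hSfacts S2 hS2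
          exact hSS (piece_disjoint hli hw hlam0 S1 S2 h1ne h1z h2ne h2z x hx1 hx2)
      · ext x
        constructor
        · rintro ⟨A, hA, hxA⟩
          rw [Finset.mem_coe, Finset.mem_biUnion] at hA
          obtain ⟨S, hS, hAS⟩ := hA
          obtain ⟨hne, hz⟩ := hSfacts S hS
          exact piece_subset_cone hw hlam0 S hz (hpartsub S hS A hAS hxA)
        · intro hx
          obtain ⟨S, hne, hz, hxS⟩ := piece_cover hw hlam0 hpos x hx
          have hS : S ∈ 𝒮 := hSmem S hne hz
          rw [← hcov S hS] at hxS
          obtain ⟨A, hA, hxA⟩ := hxS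
          exact ⟨A, by rw [Finset.mem_coe, Finset.mem_biUnion]; exact ⟨S, hS, hA⟩, hxA⟩
      · intro Δ' hΔ'
        rw [Finset.mem_biUnion] at hΔ'
        obtain ⟨S, hS, hΔS⟩ := hΔ'
        exact hsim S hS Δ' hΔS

end helpers

theorem simple_decomposition' (n r : ℕ) (k : Fin r → (Fin n → ℤ))
    (hli : LinearIndependent ℝ (fun j => (fun i => (k j i : ℝ))))
    (Δ : Set (Fin n → ℝ))
    (hΔ : Δ = {x | ∃ lam : Fin r → ℝ, (∀ j, 0 < lam j) ∧
      x = ∑ j, lam j • (fun i => (k j i : ℝ))}) :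
    ∃ parts : Finset (Set (Fin n → ℝ)),
      (∀ A ∈ parts, ∀ B ∈ parts, A ≠ B → A ∩ B = ∅) ∧
      ⋃₀ (parts : Set (Set (Fin n → ℝ))) = Δ ∧
      ∀ Δ' ∈ parts, ∃ (m : ℕ) (v : Fin m → (Fin n → ℤ))
        (b : Module.Basis (Fin n) ℤ (Fin n → ℤ)) (ι : Fin m ↪ Fin n),
        (∀ i, v i = b (ι i)) ∧
        Δ' = {x | ∃ mu : Fin m → ℝ, (∀ i, 0 < mu i) ∧
          x = ∑ i, mu i • (fun j => (v i j : ℝ))} := by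
  obtain ⟨parts, h1, h2, h3⟩ := main_lemma ((Bset k).ncard) k hli (le_refl _)
  refine ⟨parts, h1, ?_, ?_⟩
  · rw [hΔ]
    exact h2
  · intro Δ' hΔ'
    exact h3 Δ' hΔ'

end SD

theorem simple_decomposition (n r : ℕ) (k : Fin r → (Fin n → ℤ))
    (hli : LinearIndependent ℝ (fun j => (fun i => (k j i : ℝ))))
    (Δ : Set (Fin n → ℝ))
    (hΔ : Δ = {x | ∃ lam : Fin r → ℝ, (∀ j, 0 < lam j) ∧
      x = ∑ j, lam j • (fun i => (k j i : ℝ))}) :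
    ∃ parts : Finset (Set (Fin n → ℝ)),
      (∀ A ∈ parts, ∀ B ∈ parts, A ≠ B → A ∩ B = ∅) ∧
      ⋃₀ (parts : Set (Set (Fin n → ℝ))) = Δ ∧
      ∀ Δ' ∈ parts, ∃ (m : ℕ) (v : Fin m → (Fin n → ℤ))
        (b : Module.Basis (Fin n) ℤ (Fin n → ℤ)) (ι : Fin m ↪ Fin n),
        (∀ i, v i = b (ι i)) ∧
        Δ' = {x | ∃ mu : Fin m → ℝ, (∀ i, 0 < mu i) ∧
          x = ∑ i, mu i • (fun j => (v i j : ℝ))} := by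
  exact SD.simple_decomposition' n r k hli Δ hΔ
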